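/- Let X̄ solve min ‖X‖_* subject to A(X) = b, where A : R^{n×p} → E is linear. If (i) the relative interior of ∂‖·‖_*(X̄) intersects the range of the adjoint A*, and (ii) par(∂‖·‖_*(X̄)) + rge A* = R^{n×p}, then X̄ is the unique solution. -/

import Mathlib

open Matrix

noncomputable def nuclearNorm {m n : Type*} [Fintype m] [Fintype n] [DecidableEq n]
    (A : Matrix m n ℝ) : ℝ :=
  ((Matrix.posSemidef_conjTranspose_mul_self A).1.eigenvectorUnitary *
    diagonal (((↑) : ℝ → ℝ) ∘ (√·) ∘ (Matrix.posSemidef_conjTranspose_mul_self A).1.eigenvalues) *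
    (star (Matrix.posSemidef_conjTranspose_mul_self A).1.eigenvectorUnitary : Matrix n n ℝ)).trace

noncomputable def opNorm {m n : Type*} [Fintype m] [Fintype n] [DecidableEq m] [DecidableEq n]
    (A : Matrix m n ℝ) : ℝ :=
  ‖(LinearMap.toContinuousLinearMap
      (Matrix.toEuclideanLin A : EuclideanSpace ℝ n →ₗ[ℝ] EuclideanSpace ℝ m))‖

def finner {m n : Type*} [Fintype m] [Fintype n] (A B : Matrix m n ℝ) : ℝ :=
  (Aᵀ * B).trace

noncomputable def nuclearSubdiff {m n : Type*} [Fintype m] [Fintype n] [DecidableEq n]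
    (X : Matrix m n ℝ) : Set (Matrix m n ℝ) :=
  {Y | ∀ Z, nuclearNorm X + finner Y (Z - X) ≤ nuclearNorm Z}

def rectDiag (n p : ℕ) (s : Fin p → ℝ) : Matrix (Fin n) (Fin p) ℝ :=
  Matrix.of fun i j => if (i : ℕ) = (j : ℕ) then s j else 0

def blockIR (n p r : ℕ) (R : Matrix (Fin (n - r)) (Fin (p - r)) ℝ) :
    Matrix (Fin n) (Fin p) ℝ :=
  Matrix.of fun i j =>
    if h : (i : ℕ) < r ∨ (j : ℕ) < r then (if (i : ℕ) = (j : ℕ) then 1 else 0)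
    else R ⟨i - r, by have := i.isLt; omega⟩ ⟨j - r, by have := j.isLt; omega⟩

/-- The range of the adjoint $\mathcal{A}^*$, described via the Frobenius inner product. -/
def rgeAstar {n p : ℕ} {E : Type*} [NormedAddCommGroup E] [InnerProductSpace ℝ E]
    (A : Matrix (Fin n) (Fin p) ℝ →ₗ[ℝ] E) : Set (Matrix (Fin n) (Fin p) ℝ) :=
  {M | ∃ y : E, ∀ Z, finner M Z = (inner ℝ y (A Z) : ℝ)}

lemma finner_eq_sum {m n : Type*} [Fintype m] [Fintype n] (A B : Matrix m n ℝ) :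
    finner A B = ∑ j, ∑ i, A i j * B i j := by
  simp [finner, Matrix.trace, Matrix.mul_apply, Matrix.diag]

lemma finner_add_left {m n : Type*} [Fintype m] [Fintype n] (A B C : Matrix m n ℝ) :
    finner (A + B) C = finner A C + finner B C := by
  simp [finner_eq_sum, add_mul, Finset.sum_add_distrib]

lemma finner_sub_left {m n : Type*} [Fintype m] [Fintype n] (A B C : Matrix m n ℝ) :
    finner (A - B) C = finner A C - finner B C := by
  simp [finner_eq_sum, sub_mul, Finset.sum_sub_distrib]

lemma finner_smul_left {m n : Type*} [Fintype m] [Fintype n] (c : ℝ) (A C : Matrix m n ℝ) :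
    finner (c • A) C = c * finner A C := by
  simp [finner_eq_sum, Finset.mul_sum, mul_assoc]

lemma finner_self_eq_zero {m n : Type*} [Fintype m] [Fintype n] {A : Matrix m n ℝ}
    (h : finner A A = 0) : A = 0 := by
  rw [finner_eq_sum] at h
  ext i j
  have h1 : ∀ j ∈ Finset.univ, (0:ℝ) ≤ ∑ i, A i j * A i j := fun j _ =>
    Finset.sum_nonneg fun i _ => mul_self_nonneg _
  have h2 := (Finset.sum_eq_zero_iff_of_nonneg h1).1 h j (Finset.mem_univ j)
  have h3 := (Finset.sum_eq_zero_iff_of_nonneg (fun i _ => mul_self_nonneg (A i j))).1 h2 i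
    (Finset.mem_univ i)
  simpa [mul_self_eq_zero] using h3

/-- Extension past an intrinsic-interior point stays in the set for small t. -/
lemma exists_pos_extend {V : Type*} [AddCommGroup V] [Module ℝ V] [TopologicalSpace V]
    [IsTopologicalAddGroup V] [ContinuousSMul ℝ V] {s : Set V}
    {Y G : V} (hY : Y ∈ intrinsicInterior ℝ s) (hG : G ∈ s) :
    ∃ t : ℝ, 0 < t ∧ Y + t • (Y - G) ∈ s := by
  obtain ⟨y', hy', hyY⟩ := mem_intrinsicInterior.1 hY
  have hYs : Y ∈ s := intrinsicInterior_subset hY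
  have hYspan : Y ∈ affineSpan ℝ s := subset_affineSpan ℝ s hYs
  have hGspan : G ∈ affineSpan ℝ s := subset_affineSpan ℝ s hG
  have hmem : ∀ t : ℝ, Y + t • (Y - G) ∈ affineSpan ℝ s := by
    intro t
    have := AffineSubspace.smul_vsub_vadd_mem (affineSpan ℝ s) (1 + t) hYspan hGspan hGspan
    have heq : Y + t • (Y - G) = (1 + t) • (Y - G) +ᵥ G := by
      simp [vadd_eq_add, add_smul]; abel
    rw [heq]; exact this
  set c : ℝ → affineSpan ℝ s := fun t => ⟨Y + t • (Y - G), hmem t⟩ with hc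
  have hcont : Continuous c := by
    apply Continuous.subtype_mk
    fun_prop
  have hc0 : c 0 = y' := by
    apply Subtype.ext
    simp [hc, hyY]
  have hnb : c ⁻¹' interior ((↑) ⁻¹' s : Set <| affineSpan ℝ s) ∈ nhds (0:ℝ) := by
    apply hcont.continuousAt.preimage_mem_nhds
    exact isOpen_interior.mem_nhds (hc0 ▸ hy')
  have hnb' : c ⁻¹' interior ((↑) ⁻¹' s : Set <| affineSpan ℝ s) ∈ nhdsWithin (0:ℝ) (Set.Ioi 0) :=
    nhdsWithin_le_nhds hnb
  have hev : ∀ᶠ t in nhdsWithin (0:ℝ) (Set.Ioi 0),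
      t ∈ c ⁻¹' interior ((↑) ⁻¹' s : Set <| affineSpan ℝ s) ∧ t ∈ Set.Ioi (0:ℝ) :=
    Filter.eventually_and.2 ⟨hnb', eventually_mem_nhdsWithin⟩
  obtain ⟨t, ht, htpos⟩ := hev.exists
  refine ⟨t, htpos, ?_⟩
  have : c t ∈ ((↑) ⁻¹' s : Set <| affineSpan ℝ s) := interior_subset ht
  exact this

open Pointwise in
theorem unique_solution_of_suff_conditions {n p : ℕ} {E : Type*}
    [NormedAddCommGroup E] [InnerProductSpace ℝ E] [FiniteDimensional ℝ E]
    (A : Matrix (Fin n) (Fin p) ℝ →ₗ[ℝ] E) (b : E)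
    (Xb : Matrix (Fin n) (Fin p) ℝ)
    (hfeas : A Xb = b)
    (hmin : ∀ X, A X = b → nuclearNorm Xb ≤ nuclearNorm X)
    (hri : (intrinsicInterior ℝ (nuclearSubdiff Xb) ∩ rgeAstar A).Nonempty)
    (hpar : (↑(vectorSpan ℝ (nuclearSubdiff Xb)) : Set (Matrix (Fin n) (Fin p) ℝ))
        + rgeAstar A = Set.univ) :
    ∀ X, A X = b → nuclearNorm X = nuclearNorm Xb → X = Xb := by
  intro X hAX hnorm
  obtain ⟨Y, hYint, y, hy⟩ := hri
  have hAD : A (X - Xb) = 0 := by rw [map_sub, hAX, hfeas, sub_self]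
  have hYD : finner Y (X - Xb) = 0 := by
    rw [hy (X - Xb), hAD, inner_zero_right]
  have hle : ∀ G ∈ nuclearSubdiff Xb, finner G (X - Xb) ≤ 0 := by
    intro G hG
    have := hG X
    rw [hnorm] at this
    linarith
  have hGD : ∀ G ∈ nuclearSubdiff Xb, finner G (X - Xb) = 0 := by
    intro G hG
    obtain ⟨t, htpos, hmem⟩ := exists_pos_extend hYint hG
    have h1 := hle _ hmem
    rw [finner_add_left, finner_smul_left, finner_sub_left, hYD] at h1
    nlinarith [hle G hG]
  have hspan : ∀ V ∈ vectorSpan ℝ (nuclearSubdiff Xb), finner V (X - Xb) = 0 := by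
    intro V hV
    refine Submodule.span_induction ?_ ?_ ?_ ?_ hV
    · rintro v ⟨a, ha, c, hc, rfl⟩
      simp only [vsub_eq_sub]
      rw [finner_sub_left, hGD a ha, hGD c hc, sub_self]
    · simp [finner_eq_sum]
    · intro a c _ _ hac hcc
      rw [finner_add_left, hac, hcc, add_zero]
    · intro r a _ ha
      rw [finner_smul_left, ha, mul_zero]
  have hrge : ∀ M ∈ rgeAstar A, finner M (X - Xb) = 0 := by
    rintro M ⟨ym, hym⟩
    rw [hym (X - Xb), hAD, inner_zero_right]
  have hD : X - Xb ∈ (↑(vectorSpan ℝ (nuclearSubdiff Xb)) : Set (Matrix (Fin n) (Fin p) ℝ))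
      + rgeAstar A := by rw [hpar]; trivial
  obtain ⟨v, hv, m, hm, hsum⟩ := hD
  have hsum' : v + m = X - Xb := hsum
  have hzero : finner (X - Xb) (X - Xb) = 0 := by
    nth_rewrite 1 [← hsum']
    rw [finner_add_left, hspan v hv, hrge m hm, add_zero]
  have := finner_self_eq_zero hzero
  rw [sub_eq_zero] at this
  exact this
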